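/- Let R ≥ 3 be an odd integer. Consider the vertex set V = (ZMod R) ∪ {C} (with C an extra 'center' vertex) and, for each color i ∈ ZMod R, the edge set M_i = {{C, i}} ∪ { {i+p, i−p} : 1 ≤ p ≤ (R−1)/2 }. Then: for every pair of distinct colors i ≠ j, the graph on V with edge set M_i ∪ M_j is connected, if and only if R is a prime number. -/

import Mathlib

/-- The color class of color `i` in the standard edge-coloring of the complete graph
`K_{R+1}` on vertices `ZMod R ∪ {C}` (with `none` as the center `C`): the spoke
`{C, i}` together with the chords `{i + p, i - p}` for `1 ≤ p ≤ (R-1)/2`. -/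
def stdMatching (R : ℕ) (i : ZMod R) : Set (Sym2 (Option (ZMod R))) :=
  {s(none, some i)} ∪
    {e | ∃ p : ℕ, 1 ≤ p ∧ p ≤ (R - 1) / 2 ∧
      e = s(some (i + (p : ZMod R)), some (i - (p : ZMod R)))}

open SimpleGraph

private lemma reach_mem {V : Type*} {G : SimpleGraph V} {K : Set V}
    (hK : ∀ a b, G.Adj a b → a ∈ K → b ∈ K) {u v : V} (hu : u ∈ K)
    (h : G.Reachable u v) : v ∈ K := by
  obtain ⟨w⟩ := h
  induction w with
  | nil => exact hu
  | cons h p ih => exact ih (hK _ _ h hu)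

private lemma isUnit_two {R : ℕ} (hR : 3 ≤ R) (hodd : Odd R) :
    IsUnit (2 : ZMod R) := by
  have hc : Nat.Coprime 2 R := by
    rw [Nat.prime_two.coprime_iff_not_dvd]
    intro h
    rw [Nat.odd_iff] at hodd
    omega
  simpa using (ZMod.isUnit_iff_coprime 2 R).mpr hc

private lemma add_self_ne_zero {R : ℕ} (hR : 3 ≤ R) (hodd : Odd R)
    {c : ZMod R} (hc : c ≠ 0) : c + c ≠ 0 := by
  intro h
  have h2 : (2 : ZMod R) * c = 0 := by rw [two_mul]; exact h
  exact hc ((isUnit_two hR hodd).mul_right_eq_zero.mp h2)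

private lemma chord_mem {R : ℕ} (hR : 3 ≤ R) (hodd : Odd R) (i c : ZMod R)
    (hc : c ≠ 0) : s(some (i + c), some (i - c)) ∈ stdMatching R i := by
  haveI : NeZero R := ⟨by omega⟩
  have hv1 : 1 ≤ c.val := ZMod.val_pos.mpr hc
  have hvR : c.val < R := ZMod.val_lt c
  have hRodd : R % 2 = 1 := Nat.odd_iff.mp hodd
  right
  by_cases h : c.val ≤ (R - 1) / 2
  · exact ⟨c.val, hv1, h, by rw [ZMod.natCast_rightInverse c]⟩
  · refine ⟨R - c.val, by omega, by omega, ?_⟩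
    have hcast : ((R - c.val : ℕ) : ZMod R) = -c := by
      rw [Nat.cast_sub hvR.le, ZMod.natCast_self, ZMod.natCast_rightInverse c,
        zero_sub]
    rw [hcast, sub_neg_eq_add, ← sub_eq_add_neg, Sym2.eq_swap]

private lemma spoke_adj {R : ℕ} (hR : 3 ≤ R) (i j : ZMod R) :
    (fromEdgeSet (stdMatching R i ∪ stdMatching R j)).Adj none (some i) := by
  rw [fromEdgeSet_adj]
  exact ⟨Or.inl (Or.inl rfl), by simp⟩

private lemma spoke_adj' {R : ℕ} (hR : 3 ≤ R) (i j : ZMod R) :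
    (fromEdgeSet (stdMatching R i ∪ stdMatching R j)).Adj none (some j) := by
  rw [fromEdgeSet_adj]
  exact ⟨Or.inr (Or.inl rfl), by simp⟩

private lemma chord_adj {R : ℕ} (hR : 3 ≤ R) (hodd : Odd R) (i c : ZMod R)
    (hc : c ≠ 0) (j : ZMod R) :
    (fromEdgeSet (stdMatching R i ∪ stdMatching R j)).Adj
      (some (i + c)) (some (i - c)) := by
  rw [fromEdgeSet_adj]
  refine ⟨Or.inl (chord_mem hR hodd i c hc), ?_⟩
  intro h
  apply add_self_ne_zero hR hodd hc
  have : i + c = i - c := by exact Option.some_injective _ h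
  linear_combination this

private lemma chord_adj' {R : ℕ} (hR : 3 ≤ R) (hodd : Odd R) (i c : ZMod R)
    (hc : c ≠ 0) (j : ZMod R) :
    (fromEdgeSet (stdMatching R j ∪ stdMatching R i)).Adj
      (some (i + c)) (some (i - c)) := by
  rw [fromEdgeSet_adj]
  refine ⟨Or.inr (chord_mem hR hodd i c hc), (chord_adj hR hodd i c hc j).ne⟩

/-- Step lemma for the prime direction: from a vertex reachable from the center,
the vertex shifted by `2(j-i)` is also reachable. -/
private lemma step_reach {R : ℕ} (hR : 3 ≤ R) (hodd : Odd R) {i j : ZMod R}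
    (hij : i ≠ j) {x : ZMod R}
    (hx : (fromEdgeSet (stdMatching R i ∪ stdMatching R j)).Reachable none (some x)) :
    (fromEdgeSet (stdMatching R i ∪ stdMatching R j)).Reachable none
      (some (x + 2 * (j - i))) := by
  have hd : j - i ≠ 0 := sub_ne_zero.mpr (Ne.symm hij)
  by_cases h0 : x = i
  · have hadj := chord_adj' hR hodd j (j - i) hd i
    have h1 : j + (j - i) = x + 2 * (j - i) := by linear_combination -h0
    have h2 : j - (j - i) = x := by linear_combination -h0
    rw [h1, h2] at hadj
    exact hx.trans hadj.symm.reachable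
  · by_cases h1 : x + (j - i) = i
    · have : x + 2 * (j - i) = j := by linear_combination h1
      rw [this]
      exact (spoke_adj' hR i j).reachable
    · have hadj1 := chord_adj hR hodd i (x - i) (sub_ne_zero.mpr h0) j
      have e1 : i + (x - i) = x := by ring
      rw [e1] at hadj1
      have hadj2 := chord_adj' hR hodd j (x + (j - i) - i)
        (sub_ne_zero.mpr h1) i
      have e2 : j + (x + (j - i) - i) = x + 2 * (j - i) := by ring
      have e3 : j - (x + (j - i) - i) = i - (x - i) := by ring
      rw [e2, e3] at hadj2
      exact (hx.trans hadj1.reachable).trans hadj2.symm.reachable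

theorem stmt3 (R : ℕ) (hR : 3 ≤ R) (hodd : Odd R) :
    (∀ i j : ZMod R, i ≠ j →
      (SimpleGraph.fromEdgeSet (stdMatching R i ∪ stdMatching R j)).Connected) ↔
    R.Prime := by
  haveI : NeZero R := ⟨by omega⟩
  haveI : Fact (1 < R) := ⟨by omega⟩
  constructor
  · -- connected for all pairs → prime
    intro hcon
    by_contra hp
    obtain ⟨m, hmdvd, hm2, hmR⟩ := Nat.exists_dvd_of_not_prime2 (by omega) hp
    have hj : ((m : ℕ) : ZMod R) ≠ 0 := by
      intro h
      rw [ZMod.natCast_eq_zero_iff] at h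
      have := Nat.le_of_dvd (by omega) h
      omega
    have hconn := hcon 0 (m : ZMod R) (Ne.symm hj)
    haveI : NeZero m := ⟨by omega⟩
    set G := fromEdgeSet (stdMatching R 0 ∪ stdMatching R (m : ZMod R)) with hG
    let φ : ZMod R →+* ZMod m := ZMod.castHom hmdvd (ZMod m)
    let K : Set (Option (ZMod R)) := {v | ∀ a, v = some a → φ a = 0}
    -- closure of K under edges of a single color class with φ i = 0
    have hcolor : ∀ (i : ZMod R), φ i = 0 → ∀ a b : Option (ZMod R),
        s(a, b) ∈ stdMatching R i → a ∈ K → b ∈ K := by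
      intro i hφi a b hmem haK
      rcases hmem with hsp | ⟨p, _, _, hch⟩
      · rw [Set.mem_singleton_iff, Sym2.eq_iff] at hsp
        rcases hsp with ⟨ha, hb⟩ | ⟨ha, hb⟩
        · subst hb
          intro a' ha'
          rw [Option.some_injective _ ha'.symm]
          exact hφi
        · subst hb; intro a' ha'; simp at ha'
      · rw [Sym2.eq_iff] at hch
        rcases hch with ⟨ha, hb⟩ | ⟨ha, hb⟩
        · subst ha hb
          intro a' ha'
          rw [Option.some_injective _ ha'.symm]
          have h0 : φ (i + (p : ZMod R)) = 0 := haK _ rfl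
          have : i - (p : ZMod R) = 2 * i - (i + (p : ZMod R)) := by ring
          rw [this, map_sub, h0, map_mul, map_ofNat, hφi]
          ring
        · subst ha hb
          intro a' ha'
          rw [Option.some_injective _ ha'.symm]
          have h0 : φ (i - (p : ZMod R)) = 0 := haK _ rfl
          have : i + (p : ZMod R) = 2 * i - (i - (p : ZMod R)) := by ring
          rw [this, map_sub, h0, map_mul, map_ofNat, hφi]
          ring
    have hclosed : ∀ a b, G.Adj a b → a ∈ K → b ∈ K := by
      intro a b hadj haK
      rw [hG, fromEdgeSet_adj] at hadj
      rcases hadj.1 with hmem | hmem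
      · exact hcolor 0 (map_zero φ) a b hmem haK
      · exact hcolor (m : ZMod R) (by simp [φ]) a b hmem haK
    have hnoneK : (none : Option (ZMod R)) ∈ K := by intro a' ha'; simp at ha'
    have h1K : (some (1 : ZMod R)) ∈ K :=
      reach_mem hclosed hnoneK (hconn.preconnected none (some 1))
    have h10 := h1K 1 rfl
    rw [map_one] at h10
    haveI : Fact (1 < m) := ⟨by omega⟩
    exact one_ne_zero h10
  · -- prime → connected
    intro hp i j hij
    haveI : Fact R.Prime := ⟨hp⟩
    set G := fromEdgeSet (stdMatching R i ∪ stdMatching R j) with hG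
    have h2 : (2 : ZMod R) ≠ 0 := (isUnit_two hR hodd).ne_zero
    have hd : j - i ≠ 0 := sub_ne_zero.mpr (Ne.symm hij)
    have he : (2 : ZMod R) * (j - i) ≠ 0 := mul_ne_zero h2 hd
    have key : ∀ n : ℕ, G.Reachable none (some (i + n * (2 * (j - i)))) := by
      intro n
      induction n with
      | zero =>
        simp only [Nat.cast_zero, zero_mul, add_zero]
        exact (spoke_adj hR i j).reachable
      | succ n ih =>
        have := step_reach hR hodd hij ih
        have harith : i + (n : ZMod R) * (2 * (j - i)) + 2 * (j - i) =
            i + ((n : ℕ) + 1 : ℕ) * (2 * (j - i)) := by push_cast; ring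
        rw [harith] at this
        exact this
    have hall : ∀ a : ZMod R, G.Reachable none (some a) := by
      intro a
      set e : ZMod R := 2 * (j - i) with hedef
      have hkey := key ((e⁻¹ * (a - i)).val)
      have hcast : (((e⁻¹ * (a - i)).val : ℕ) : ZMod R) = e⁻¹ * (a - i) :=
        ZMod.natCast_rightInverse _
      rw [hcast] at hkey
      have heq : i + e⁻¹ * (a - i) * e = a := by
        field_simp
        ring
      rwa [heq] at hkey
    rw [SimpleGraph.connected_iff]
    refine ⟨?_, ⟨none⟩⟩
    intro u v
    match u, v with
    | none, none => exact Reachable.refl none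
    | none, some a => exact hall a
    | some a, none => exact (hall a).symm
    | some a, some b => exact (hall a).symm.trans (hall b)
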